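/- Let u₀ : ℝ → ℝ be measurable and locally integrable with u₀(x) ≤ u_M for all x, let c < 0, Δx > 0, Δt > 0, λ = Δt/Δx with |c|·λ ≤ 1, and fix x₊ ∈ ℝ with x₋ = x₊ − Δx. Define ū_j = (1/Δx)∫_{x₋}^{x₊} u₀(x) dx and f̌₊ = (c/Δt)∫₀^{Δt} u₀(x₊ − c t) dt. Then ū_j − λ·(f̌₊ − c·ū_j) ≤ u_M. (This is Theorem 3.3 of the paper instantiated to the linear flux f(u) = c u with c < 0, where the upwind Godunov flux at the left interface is f(ū_j) = c·ū_j.) -/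

import Mathlib

open MeasureTheory intervalIntegral

theorem godunov_limited_update_max_neg_speed
    (u₀ : ℝ → ℝ) (hmeas : Measurable u₀) (hu : MeasureTheory.LocallyIntegrable u₀)
    (u_M : ℝ) (hbound : ∀ x, u₀ x ≤ u_M)
    (c Δx Δt lam xp xm : ℝ) (hc : c < 0) (hΔx : 0 < Δx) (hΔt : 0 < Δt)
    (hlam : lam = Δt / Δx) (hcfl : |c| * lam ≤ 1) (hx : xm = xp - Δx)
    (ubar : ℝ)
    (hubar : ubar = (1 / Δx) * ∫ x in xm..xp, u₀ x)
    (fp : ℝ)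
    (hfp : fp = (c / Δt) * ∫ t in (0:ℝ)..Δt, u₀ (xp - c * t)) :
    ubar - lam * (fp - c * ubar) ≤ u_M := by
  have hc' : c ≠ 0 := ne_of_lt hc
  have hlam0 : 0 < lam := by rw [hlam]; positivity
  have habs : |c| = -c := abs_of_neg hc
  have h1 : 0 ≤ 1 + lam * c := by nlinarith [hcfl]
  have hint : ∀ a b : ℝ, IntervalIntegrable u₀ volume a b := fun a b =>
    intervalIntegrable_iff.mpr
      ((hu.integrableOn_isCompact isCompact_uIcc).mono_set Set.uIoc_subset_uIcc)
  -- change of variables in fp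
  have hcov : (∫ t in (0:ℝ)..Δt, u₀ (xp - c * t))
      = c⁻¹ * ∫ y in xp - c * Δt..xp, u₀ y := by
    have := intervalIntegral.integral_comp_mul_left (fun t => u₀ (xp - t)) hc'
      (a := 0) (b := Δt)
    simp only [mul_zero, smul_eq_mul] at this
    rw [this, intervalIntegral.integral_comp_sub_left u₀ xp, sub_zero]
  set I1 : ℝ := ∫ x in xm..xp, u₀ x with hI1def
  set I2 : ℝ := ∫ x in xp..xp - c * Δt, u₀ x with hI2def
  have hrev : (∫ y in xp - c * Δt..xp, u₀ y) = -I2 := by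
    rw [hI2def, intervalIntegral.integral_symm]
  -- bounds on the integrals
  have hmono : ∀ a b : ℝ, a ≤ b → (∫ x in a..b, u₀ x) ≤ u_M * (b - a) := by
    intro a b hab
    have := intervalIntegral.integral_mono_on hab (hint a b)
      (intervalIntegrable_const (c := u_M)) (fun x _ => hbound x)
    simpa [mul_comm] using this
  have hxm : xm ≤ xp := by rw [hx]; linarith
  have hxp2 : xp ≤ xp - c * Δt := by nlinarith
  have hI1 : I1 ≤ u_M * Δx := by
    have h := hmono xm xp hxm
    have hxx : u_M * (xp - xm) = u_M * Δx := by rw [hx]; ring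
    rw [hxx] at h; exact h
  have hI2 : I2 ≤ u_M * (-(c * Δt)) := by
    have := hmono xp (xp - c * Δt) hxp2
    simpa using this
  -- algebra
  have hubarm : ubar * Δx = I1 := by
    rw [hubar]; field_simp
  have hfpm : fp * Δt = -I2 := by
    rw [hfp, hcov, hrev]; field_simp
  have hld : lam * Δx = Δt := by
    rw [hlam]; field_simp
  have key : (ubar - lam * (fp - c * ubar)) * Δx ≤ u_M * Δx := by
    have hfp2 : lam * fp * Δx = -I2 := by
      calc lam * fp * Δx = fp * (lam * Δx) := by ring
        _ = fp * Δt := by rw [hld]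
        _ = -I2 := hfpm
    have h2 : (1 + lam * c) * I1 ≤ (1 + lam * c) * (u_M * Δx) :=
      mul_le_mul_of_nonneg_left hI1 h1
    have h3 : lam * c * Δx = c * Δt := by
      calc lam * c * Δx = c * (lam * Δx) := by ring
        _ = c * Δt := by rw [hld]
    have heq : (ubar - lam * (fp - c * ubar)) * Δx = (1 + lam * c) * I1 + I2 := by
      linear_combination (1 + lam * c) * hubarm - hfp2
    have hfin : (1 + lam * c) * (u_M * Δx) + u_M * (-(c * Δt)) = u_M * Δx := by
      linear_combination u_M * h3
    calc (ubar - lam * (fp - c * ubar)) * Δx = (1 + lam * c) * I1 + I2 := heq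
      _ ≤ (1 + lam * c) * (u_M * Δx) + u_M * (-(c * Δt)) := add_le_add h2 hI2
      _ = u_M * Δx := hfin
  exact le_of_mul_le_mul_right key hΔx
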